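/- If u, ū : L² → ℝ³ are a Bonnet pair (isometric surfaces with the same mean curvature function at corresponding points, not congruent in ℝ³), then the cylinders f = (u, id) and f̄ = (ū, id) : L² × ℝ^{n−2} → ℝ^{n+1} (n ≥ 3) induce the same Möbius metric g = ḡ, while their principal directions do not correspond; hence f̄ is a Möbius deformation of f. -/
import Mathlib


open Matrix BigOperators

/-- Proposition 3.1: let `u, ū : L² → ℝ³` be a Bonnet pair: isometric surfaces
(same first fundamental form `I_u`, hence same Gauss curvature `K_u`) with the
same mean curvature `H_u` at corresponding points, but non-congruent (their
shape operators `Su`, `S̄u` differ at some point `p₀`).  Then the cylinders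
`f = (u, id)` and `f̄ = (ū, id) : L² × ℝ^{n−2} → ℝ^{n+1}` induce the same
Möbius metric `g = ḡ`, while their Möbius second fundamental forms
`B = ρ⁻¹(S_f − H_f·Id)` differ at `p₀` (the principal directions do not
correspond); hence `f̄` is a Möbius deformation of `f`. -/

lemma aux_trace_fb {m l : Type*} [Fintype m] [Fintype l] (A : Matrix m m ℝ)
    (B : Matrix m l ℝ) (C : Matrix l m ℝ) (D : Matrix l l ℝ) :
    (Matrix.fromBlocks A B C D).trace = A.trace + D.trace := by
  simp [Matrix.trace, Matrix.diag, Fintype.sum_sum_type, Matrix.fromBlocks]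

lemma aux_trace_mul_tr (S : Matrix (Fin 2) (Fin 2) ℝ) (hS : S.IsSymm) :
    (S * Sᵀ).trace = S.trace ^ 2 - 2 * S.det := by
  have h : S 1 0 = S 0 1 := by
    have := hS.apply 0 1
    simpa using this
  simp [Matrix.trace_fin_two, Matrix.mul_apply, Fin.sum_univ_two, Matrix.det_fin_two,
    Matrix.transpose_apply, h]
  ring

theorem stmt11 (n : ℕ) (hn : 3 ≤ n) (L : Type*)
    (Iu : L → Matrix (Fin 2) (Fin 2) ℝ)
    (Hu Ku : L → ℝ)
    (Su Sbu : L → Matrix (Fin 2) (Fin 2) ℝ)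
    (hSsym : ∀ p, (Su p).IsSymm) (hSbsym : ∀ p, (Sbu p).IsSymm)
    (htr : ∀ p, (Su p).trace = 2 * Hu p) (hbtr : ∀ p, (Sbu p).trace = 2 * Hu p)
    (hdet : ∀ p, (Su p).det = Ku p) (hbdet : ∀ p, (Sbu p).det = Ku p)
    (p₀ : L) (hne : Su p₀ ≠ Sbu p₀)
    -- umbilic-free condition: ρ² = 4H_u² − (2n/(n−1))K_u > 0
    (hpos : ∀ p, 0 < 4 * (Hu p) ^ 2 - (2 * (n : ℝ) / ((n : ℝ) - 1)) * Ku p)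
    (If Sf Sbf : L → Matrix (Fin 2 ⊕ Fin (n - 2)) (Fin 2 ⊕ Fin (n - 2)) ℝ)
    (hIf : ∀ p, If p = Matrix.fromBlocks (Iu p) 0 0 1)
    (hSf : ∀ p, Sf p = Matrix.fromBlocks (Su p) 0 0 0)
    (hSbf : ∀ p, Sbf p = Matrix.fromBlocks (Sbu p) 0 0 0)
    (ρ ρb : L → ℝ)
    (hρ : ∀ p, ρ p = Real.sqrt (((n : ℝ) / ((n : ℝ) - 1)) *
      ((Sf p * (Sf p)ᵀ).trace - n * ((Sf p).trace / n) ^ 2)))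
    (hρb : ∀ p, ρb p = Real.sqrt (((n : ℝ) / ((n : ℝ) - 1)) *
      ((Sbf p * (Sbf p)ᵀ).trace - n * ((Sbf p).trace / n) ^ 2)))
    (g gb : L → Matrix (Fin 2 ⊕ Fin (n - 2)) (Fin 2 ⊕ Fin (n - 2)) ℝ)
    (hg : ∀ p, g p = (ρ p) ^ 2 • If p)
    (hgb : ∀ p, gb p = (ρb p) ^ 2 • If p)
    (B Bb : L → Matrix (Fin 2 ⊕ Fin (n - 2)) (Fin 2 ⊕ Fin (n - 2)) ℝ)
    (hB : ∀ p, B p = (ρ p)⁻¹ • (Sf p - ((Sf p).trace / n) • 1))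
    (hBb : ∀ p, Bb p = (ρb p)⁻¹ • (Sbf p - ((Sbf p).trace / n) • 1)) :
    (∀ p, g p = gb p) ∧ B p₀ ≠ Bb p₀ := by

  have hn1 : (1 : ℝ) < (n : ℝ) := by
    have : (3 : ℝ) ≤ (n : ℝ) := by exact_mod_cast hn
    linarith
  have hn0 : (n : ℝ) ≠ 0 := by linarith
  have hn1' : (n : ℝ) - 1 ≠ 0 := by linarith
  -- traces of Sf, Sbf
  have htrSf : ∀ p, (Sf p).trace = 2 * Hu p := by
    intro p; rw [hSf p]; simp [aux_trace_fb, htr p]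
  have htrSbf : ∀ p, (Sbf p).trace = 2 * Hu p := by
    intro p; rw [hSbf p]; simp [aux_trace_fb, hbtr p]
  have hmulSf : ∀ p, (Sf p * (Sf p)ᵀ).trace = (Su p).trace ^ 2 - 2 * (Su p).det := by
    intro p
    rw [hSf p, Matrix.fromBlocks_transpose, Matrix.fromBlocks_multiply]
    simp [aux_trace_fb, aux_trace_mul_tr (Su p) (hSsym p)]
  have hmulSbf : ∀ p, (Sbf p * (Sbf p)ᵀ).trace = (Sbu p).trace ^ 2 - 2 * (Sbu p).det := by
    intro p
    rw [hSbf p, Matrix.fromBlocks_transpose, Matrix.fromBlocks_multiply]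
    simp [aux_trace_fb, aux_trace_mul_tr (Sbu p) (hSbsym p)]
  have key : ∀ p, ((n : ℝ) / ((n : ℝ) - 1)) *
      ((Sf p * (Sf p)ᵀ).trace - n * ((Sf p).trace / n) ^ 2)
      = 4 * (Hu p) ^ 2 - (2 * (n : ℝ) / ((n : ℝ) - 1)) * Ku p := by
    intro p
    rw [hmulSf p, htrSf p, htr p, hdet p]
    field_simp
    ring
  have keyb : ∀ p, ((n : ℝ) / ((n : ℝ) - 1)) *
      ((Sbf p * (Sbf p)ᵀ).trace - n * ((Sbf p).trace / n) ^ 2)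
      = 4 * (Hu p) ^ 2 - (2 * (n : ℝ) / ((n : ℝ) - 1)) * Ku p := by
    intro p
    rw [hmulSbf p, htrSbf p, hbtr p, hbdet p]
    field_simp
    ring
  have hρeq : ∀ p, ρ p = ρb p := by
    intro p; rw [hρ p, hρb p, key p, keyb p]
  have hρpos : ∀ p, 0 < ρ p := by
    intro p; rw [hρ p, key p]; exact Real.sqrt_pos.2 (hpos p)
  refine ⟨fun p => by rw [hg p, hgb p, hρeq p], ?_⟩
  intro hBB
  apply hne
  have h1 : Sf p₀ - ((Sf p₀).trace / n) • 1 = Sbf p₀ - ((Sbf p₀).trace / n) • 1 := by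
    have h2 := hBB
    rw [hB p₀, hBb p₀, ← hρeq p₀] at h2
    have hinv : (ρ p₀)⁻¹ ≠ 0 := inv_ne_zero (ne_of_gt (hρpos p₀))
    exact smul_right_injective _ hinv h2
  have h3 : Sf p₀ = Sbf p₀ := by
    have ht : (Sf p₀).trace = (Sbf p₀).trace := by rw [htrSf p₀, htrSbf p₀]
    rw [ht] at h1
    have := congrArg (· + ((Sbf p₀).trace / n) • (1 : Matrix (Fin 2 ⊕ Fin (n-2)) (Fin 2 ⊕ Fin (n-2)) ℝ)) h1
    simpa [sub_add_cancel] using this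
  rw [hSf p₀, hSbf p₀] at h3
  have := congrArg Matrix.toBlocks₁₁ h3
  simpa [Matrix.toBlocks_fromBlocks₁₁] using this
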